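/- Relaxed Repulsing-AST Rule (Theorem 6, first part): Let (M_n)_{n∈ℕ} be an adapted, integrable real-valued process on a filtered probability space and T a stopping time. Suppose there are constants ε > 0, c > 0 and an index i₀ ∈ ℕ such that: (i) P({M_{i₀} < 0} ∩ {T > i₀}) > 0; (ii) for every n ≥ i₀, M_n ≥ 0 P-almost everywhere on the event {T = n}; (iii) for every n ≥ i₀, E(M_{n+1} | ℱ_n) ≤ M_n − ε P-almost everywhere on {T > n}; and (iv) for every n ≥ i₀, |M_{n+1} − M_n| < c P-almost surely. Then P(T = ∞) > 0, i.e. termination is not almost sure. -/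

import Mathlib

open MeasureTheory Filter
open scoped ENNReal Classical

section RepAux

variable {Ω : Type*} (M : ℕ → Ω → ℝ) (T : Ω → ℕ∞) (i₀ : ℕ)

/-- The "still running and still negative" region. -/
def repG (n : ℕ) : Set Ω :=
  {ω | (n : ℕ∞) < T ω ∧ ∀ j, i₀ ≤ j → j ≤ n → M j ω < 0}

/-- The process `M` stopped at the looping time and at the first time it becomes
nonnegative, reindexed from `i₀`. -/
noncomputable def repV : ℕ → Ω → ℝ
  | 0 => M i₀
  | (k+1) => fun ω => if ω ∈ repG M T i₀ (i₀ + k) then M (i₀ + k + 1) ω else repV k ω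

variable {M T i₀}

lemma repV_succ (k : ℕ) (ω : Ω) :
    repV M T i₀ (k+1) ω
      = if ω ∈ repG M T i₀ (i₀ + k) then M (i₀ + k + 1) ω else repV M T i₀ k ω := rfl

lemma repG_anti {n : ℕ} {ω : Ω} (h : ω ∈ repG M T i₀ (n + 1)) : ω ∈ repG M T i₀ n := by
  obtain ⟨h1, h2⟩ := h
  refine ⟨lt_of_le_of_lt ?_ h1, fun j hj hj' => h2 j hj (hj'.trans (Nat.le_succ n))⟩
  exact_mod_cast Nat.cast_le.2 (Nat.le_succ n)

lemma repV_eq_of_mem {k : ℕ} {ω : Ω} (h : ω ∈ repG M T i₀ (i₀ + k)) :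
    repV M T i₀ k ω = M (i₀ + k) ω := by
  cases k with
  | zero => rfl
  | succ k =>
    show (if ω ∈ repG M T i₀ (i₀ + k) then M (i₀ + k + 1) ω else repV M T i₀ k ω)
        = M (i₀ + (k+1)) ω
    exact if_pos (repG_anti h)

lemma repV_lt {c : ℝ} {ω : Ω} (hB : ∀ n, i₀ ≤ n → |M (n+1) ω - M n ω| < c)
    (h0 : M i₀ ω < c) : ∀ k, repV M T i₀ k ω < c := by
  intro k
  induction k with
  | zero => exact h0
  | succ k ih =>
    show (if ω ∈ repG M T i₀ (i₀ + k) then M (i₀ + k + 1) ω else repV M T i₀ k ω) < c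
    by_cases h : ω ∈ repG M T i₀ (i₀ + k)
    · rw [if_pos h]
      have hMn : M (i₀ + k) ω < 0 := h.2 (i₀ + k) (Nat.le_add_right _ _) le_rfl
      have := hB (i₀ + k) (Nat.le_add_right _ _)
      have := abs_lt.1 this
      linarith [this.2]
    · rw [if_neg h]; exact ih

lemma enat_eq_of_lt_of_le {a : ℕ} {t : ℕ∞} (h1 : (a : ℕ∞) < t) (h2 : t ≤ ((a+1 : ℕ) : ℕ∞)) :
    t = ((a+1 : ℕ) : ℕ∞) := by
  cases t with
  | top => exact absurd (top_le_iff.1 h2) (by exact_mod_cast ENat.coe_ne_top (a+1))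
  | coe m =>
    have h1' : a < m := by exact_mod_cast h1
    have h2' : m ≤ a + 1 := by exact_mod_cast h2
    have : m = a + 1 := by omega
    exact_mod_cast congrArg (Nat.cast : ℕ → ℕ∞) this

lemma repV_nonneg {ω : Ω}
    (hT : ∀ m, i₀ ≤ m → T ω = (m : ℕ∞) → 0 ≤ M m ω) (hTi : (i₀ : ℕ∞) < T ω) :
    ∀ k, (T ω ≤ ((i₀ + k : ℕ) : ℕ∞) ∨ ∃ j, i₀ ≤ j ∧ j ≤ i₀ + k ∧ 0 ≤ M j ω) →
      0 ≤ repV M T i₀ k ω := by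
  intro k
  induction k with
  | zero =>
    rintro (h | ⟨j, hj1, hj2, hj3⟩)
    · exact absurd h (not_le.2 hTi)
    · have : j = i₀ := le_antisymm (by simpa using hj2) hj1
      subst this; exact hj3
  | succ k ih =>
    rintro h
    show 0 ≤ if ω ∈ repG M T i₀ (i₀ + k) then M (i₀ + k + 1) ω else repV M T i₀ k ω
    by_cases hG : ω ∈ repG M T i₀ (i₀ + k)
    · rw [if_pos hG]
      rcases h with h | ⟨j, hj1, hj2, hj3⟩
      · have hTeq : T ω = ((i₀ + k + 1 : ℕ) : ℕ∞) :=
          enat_eq_of_lt_of_le hG.1 (by exact_mod_cast h)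
        exact hT (i₀ + k + 1) (by omega) hTeq
      · rcases Nat.lt_or_ge j (i₀ + k + 1) with hlt | hge
        · exact absurd hj3 (not_le.2 (hG.2 j hj1 (by omega)))
        · have : j = i₀ + k + 1 := by omega
          subst this; exact hj3
    · rw [if_neg hG]
      apply ih
      rcases not_and_or.1 hG with h1 | h2
      · exact Or.inl (by simpa [not_lt] using h1)
      · push_neg at h2
        obtain ⟨j, hj1, hj2, hj3⟩ := h2
        exact Or.inr ⟨j, hj1, hj2, hj3⟩

lemma exp_le_quadratic {x : ℝ} (hx : |x| ≤ 1) : Real.exp x ≤ 1 + x + x ^ 2 := by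
  have h := Real.exp_bound hx (n := 2) (by norm_num)
  have hsum : ∑ i ∈ Finset.range 2, x ^ i / (Nat.factorial i) = 1 + x := by
    simp [Finset.sum_range_succ, Nat.factorial]
  rw [hsum] at h
  norm_num [Nat.factorial] at h
  rw [abs_sub_le_iff] at h
  nlinarith [h.1, sq_nonneg x]

end RepAux

set_option maxHeartbeats 1000000 in
theorem relaxed_repulsing_ast_rule
    {Ω : Type*} {mΩ : MeasurableSpace Ω} {P : Measure Ω} [IsProbabilityMeasure P]
    (ℱ : Filtration ℕ mΩ) (M : ℕ → Ω → ℝ) (T : Ω → ℕ∞)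
    (hAdapted : Adapted ℱ M) (hInt : ∀ n, Integrable (M n) P)
    (hStop : ∀ n : ℕ, MeasurableSet[ℱ n] {ω | T ω ≤ (n : ℕ∞)})
    (ε c : ℝ) (hε : 0 < ε) (hc : 0 < c) (i₀ : ℕ)
    (hNeg : 0 < P {ω | M i₀ ω < 0 ∧ (i₀ : ℕ∞) < T ω})
    (hTerm : ∀ n : ℕ, i₀ ≤ n → ∀ᵐ ω ∂P, T ω = (n : ℕ∞) → 0 ≤ M n ω)
    (hDrift : ∀ n : ℕ, i₀ ≤ n → ∀ᵐ ω ∂P, (n : ℕ∞) < T ω →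
      (P[M (n + 1)|ℱ n]) ω ≤ M n ω - ε)
    (hBdd : ∀ n : ℕ, i₀ ≤ n → ∀ᵐ ω ∂P, |M (n + 1) ω - M n ω| < c) :
    0 < P {ω | T ω = ⊤} := by
  classical
  -- basic measurability
  have hMmeas : ∀ n, Measurable (M n) := fun n => (hAdapted n).mono (ℱ.le n) le_rfl
  have hTle : ∀ n : ℕ, MeasurableSet {ω | T ω ≤ (n : ℕ∞)} := fun n => ℱ.le n _ (hStop n)
  have hTgtF : ∀ n : ℕ, MeasurableSet[ℱ n] {ω | (n : ℕ∞) < T ω} := by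
    intro n
    have heq : {ω | (n : ℕ∞) < T ω} = {ω | T ω ≤ (n : ℕ∞)}ᶜ := by
      ext ω; simp [not_le]
    rw [heq]; exact (hStop n).compl
  have hTgt : ∀ n : ℕ, MeasurableSet {ω | (n : ℕ∞) < T ω} := fun n => ℱ.le n _ (hTgtF n)
  have hGmeasF : ∀ n, MeasurableSet[ℱ n] (repG M T i₀ n) := by
    intro n
    have heq : repG M T i₀ n
        = {ω | (n : ℕ∞) < T ω} ∩ ⋂ j, {ω | i₀ ≤ j → j ≤ n → M j ω < 0} := by
      ext ω; simp [repG, Set.mem_iInter]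
    rw [heq]
    refine (hTgtF n).inter (MeasurableSet.iInter fun j => ?_)
    by_cases h1 : i₀ ≤ j ∧ j ≤ n
    · have heq2 : {ω | i₀ ≤ j → j ≤ n → M j ω < 0} = {ω | M j ω < 0} := by
        ext ω; simp [h1.1, h1.2]
      rw [heq2]
      exact measurableSet_lt ((hAdapted j).mono (ℱ.mono h1.2) le_rfl) measurable_const
    · have heq2 : {ω | i₀ ≤ j → j ≤ n → M j ω < 0} = Set.univ := by
        ext ω
        simp only [Set.mem_setOf_eq, Set.mem_univ, iff_true]
        intro hj1 hj2; exact absurd ⟨hj1, hj2⟩ h1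
      rw [heq2]; exact MeasurableSet.univ
  have hGmeas : ∀ n, MeasurableSet (repG M T i₀ n) := fun n => ℱ.le n _ (hGmeasF n)
  have hVmeas : ∀ k, Measurable (repV M T i₀ k) := by
    intro k; induction k with
    | zero => exact hMmeas i₀
    | succ k ih => exact Measurable.ite (hGmeas (i₀ + k)) (hMmeas _) ih
  -- choice of δ and the set B
  obtain ⟨δ, hδ, hPB⟩ : ∃ δ : ℝ, 0 < δ ∧ 0 < P {ω | M i₀ ω ≤ -δ ∧ (i₀ : ℕ∞) < T ω} := by
    by_contra hcon
    push_neg at hcon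
    have hz : ∀ j : ℕ, P {ω | M i₀ ω ≤ -(1/(j+1 : ℝ)) ∧ (i₀ : ℕ∞) < T ω} = 0 := by
      intro j
      exact le_antisymm (hcon (1/(j+1:ℝ)) (by positivity)) zero_le
    have hsub : {ω | M i₀ ω < 0 ∧ (i₀ : ℕ∞) < T ω} ⊆
        ⋃ j : ℕ, {ω | M i₀ ω ≤ -(1/(j+1 : ℝ)) ∧ (i₀ : ℕ∞) < T ω} := by
      rintro ω ⟨h1, h2⟩
      obtain ⟨n, hn⟩ := exists_nat_one_div_lt (show (0:ℝ) < -M i₀ ω by linarith)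
      exact Set.mem_iUnion.2 ⟨n, ⟨by linarith, h2⟩⟩
    have hle : P {ω | M i₀ ω < 0 ∧ (i₀ : ℕ∞) < T ω}
        ≤ ∑' (j : ℕ), P {ω | M i₀ ω ≤ -(1/(j+1 : ℝ)) ∧ (i₀ : ℕ∞) < T ω} :=
      le_trans (measure_mono hsub) (measure_iUnion_le _)
    have hts : ∑' (j : ℕ), P {ω | M i₀ ω ≤ -(1/(j+1 : ℝ)) ∧ (i₀ : ℕ∞) < T ω} = 0 := by
      rw [tsum_congr hz]; exact tsum_zero
    rw [hts] at hle
    exact hNeg.ne' (le_antisymm hle zero_le)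
  set B : Set Ω := {ω | M i₀ ω ≤ -δ ∧ (i₀ : ℕ∞) < T ω} with hB_def
  have hBmeas : MeasurableSet B :=
    (measurableSet_le (hMmeas i₀) measurable_const).inter (hTgt i₀)
  have hBmeasF : ∀ n, i₀ ≤ n → MeasurableSet[ℱ n] B := by
    intro n hn
    refine ℱ.mono hn _ ?_
    exact (measurableSet_le (hAdapted i₀) measurable_const).inter (hTgtF i₀)
  -- the constant l
  set l : ℝ := min (ε / c^2) (1/c) with hl_def
  have hl : 0 < l := lt_min (by positivity) (by positivity)
  have hl1 : l ≤ ε / c^2 := min_le_left _ _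
  have hl2 : l ≤ 1/c := min_le_right _ _
  have hlc1 : l * c ≤ 1 := by
    rw [div_eq_mul_inv] at hl2
    calc l * c ≤ (1 * c⁻¹) * c := by nlinarith
    _ = 1 := by field_simp
  have hlε : l^2 * c^2 ≤ l * ε := by
    have h2 : l * c^2 ≤ ε := by
      rw [div_eq_mul_inv] at hl1
      have hcc : (0:ℝ) < c^2 := by positivity
      calc l * c^2 ≤ (ε * (c^2)⁻¹) * c^2 := by nlinarith
      _ = ε := by field_simp
    nlinarith
  -- a.e. regular sets
  have hEbdd : ∀ᵐ ω ∂P, ∀ n, i₀ ≤ n → |M (n+1) ω - M n ω| < c := by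
    rw [ae_all_iff]
    intro n
    by_cases h : i₀ ≤ n
    · filter_upwards [hBdd n h] with ω hω _ using hω
    · filter_upwards with ω h' using absurd h' h
  have hEterm : ∀ᵐ ω ∂P, ∀ m, i₀ ≤ m → T ω = (m : ℕ∞) → 0 ≤ M m ω := by
    rw [ae_all_iff]
    intro m
    by_cases h : i₀ ≤ m
    · filter_upwards [hTerm m h] with ω hω _ using hω
    · filter_upwards with ω h' using absurd h' h
  -- the key process
  set W : ℕ → Ω → ℝ :=
    fun k => Set.indicator B (fun ω => Real.exp (l * repV M T i₀ k ω)) with hW_def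
  have hWnonneg : ∀ k ω, 0 ≤ W k ω :=
    fun k ω => Set.indicator_nonneg (fun ω _ => (Real.exp_pos _).le) ω
  have hWbdd : ∀ k, ∀ᵐ ω ∂P, ‖W k ω‖ ≤ Real.exp (l * c) := by
    intro k
    filter_upwards [hEbdd] with ω hω
    rw [Real.norm_eq_abs, abs_of_nonneg (hWnonneg k ω)]
    by_cases hmB : ω ∈ B
    · rw [hW_def]
      simp only [Set.indicator_of_mem hmB]
      have hVlt : repV M T i₀ k ω < c := repV_lt hω (lt_of_le_of_lt hmB.1 (by linarith)) k
      exact Real.exp_le_exp.2 (by nlinarith)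
    · rw [hW_def]
      simp only [Set.indicator_of_notMem hmB]
      positivity
  have hWmeas : ∀ k, Measurable (W k) := fun k =>
    (Real.measurable_exp.comp ((hVmeas k).const_mul l)).indicator hBmeas
  have hWint : ∀ k, Integrable (W k) P :=
    fun k => Integrable.mono' (integrable_const _) (hWmeas k).aestronglyMeasurable (hWbdd k)
  -- main supermartingale step
  have key2 : ∀ k, ∫ ω, W (k+1) ω ∂P ≤ ∫ ω, W k ω ∂P := by
    intro k
    set n := i₀ + k with hn_def
    have hi₀n : i₀ ≤ n := Nat.le_add_right _ _
    set G : Set Ω := repG M T i₀ n with hG_def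
    set f : Ω → ℝ := Set.indicator (B ∩ G) (fun ω => Real.exp (l * M n ω)) with hf_def
    set g : Ω → ℝ := fun ω => Real.exp (l * (M (n+1) ω - M n ω)) with hg_def
    set h : Ω → ℝ := Set.indicator (B \ G)
      (fun ω => Real.exp (l * repV M T i₀ k ω)) with hh_def
    have hMnneg : ∀ ω, ω ∈ G → M n ω < 0 := fun ω hω => hω.2 n hi₀n le_rfl
    have hf_nonneg : ∀ ω, 0 ≤ f ω :=
      fun ω => Set.indicator_nonneg (fun ω _ => (Real.exp_pos _).le) ω
    have hf_le_one : ∀ ω, f ω ≤ 1 := by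
      intro ω
      by_cases hω : ω ∈ B ∩ G
      · rw [hf_def]
        simp only [Set.indicator_of_mem hω]
        exact Real.exp_le_one_iff.2
          (mul_nonpos_of_nonneg_of_nonpos hl.le (hMnneg ω hω.2).le)
      · rw [hf_def]; simp [Set.indicator_of_notMem hω]
    have hBG : MeasurableSet[ℱ n] (B ∩ G) := (hBmeasF n hi₀n).inter (hGmeasF n)
    have hfSM : StronglyMeasurable[ℱ n] f :=
      (Real.continuous_exp.comp_stronglyMeasurable
        (stronglyMeasurable_const.mul (hAdapted n).stronglyMeasurable)).indicator hBG
    have hg_bdd : ∀ᵐ ω ∂P, ‖g ω‖ ≤ Real.exp (l * c) := by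
      filter_upwards [hBdd n hi₀n] with ω hω
      rw [Real.norm_eq_abs, abs_of_nonneg (Real.exp_pos _).le]
      have := abs_lt.1 hω
      exact Real.exp_le_exp.2 (by nlinarith)
    have hg_meas : Measurable g :=
      Real.measurable_exp.comp (((hMmeas (n+1)).sub (hMmeas n)).const_mul l)
    have hg_int : Integrable g P :=
      Integrable.mono' (integrable_const _) hg_meas.aestronglyMeasurable hg_bdd
    have hfg_int : Integrable (f * g) P := by
      refine Integrable.mono' (integrable_const (Real.exp (l * c)))
        (((hfSM.mono (ℱ.le n)).measurable.mul hg_meas).aestronglyMeasurable) ?_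
      filter_upwards [hg_bdd] with ω hω
      rw [Pi.mul_apply, norm_mul]
      calc ‖f ω‖ * ‖g ω‖ ≤ 1 * Real.exp (l * c) := by
            refine mul_le_mul ?_ hω (norm_nonneg _) one_pos.le
            rw [Real.norm_eq_abs, abs_of_nonneg (hf_nonneg ω)]
            exact hf_le_one ω
      _ = Real.exp (l * c) := one_mul _
    have hh_meas : Measurable h :=
      (Real.measurable_exp.comp ((hVmeas k).const_mul l)).indicator
        (hBmeas.diff (hGmeas n))
    have hh_int : Integrable h P := by
      refine Integrable.mono' (integrable_const (Real.exp (l * c)))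
        hh_meas.aestronglyMeasurable ?_
      filter_upwards [hEbdd] with ω hω
      rw [Real.norm_eq_abs,
        abs_of_nonneg (Set.indicator_nonneg (fun ω _ => (Real.exp_pos _).le) ω)]
      by_cases hmB : ω ∈ B \ G
      · rw [Set.indicator_of_mem hmB]
        have hVlt : repV M T i₀ k ω < c :=
          repV_lt hω (lt_of_le_of_lt hmB.1.1 (by linarith)) k
        exact Real.exp_le_exp.2 (by nlinarith)
      · rw [Set.indicator_of_notMem hmB]
        positivity
    have hf_int : Integrable f P := by
      refine Integrable.mono' (integrable_const 1)
        ((hfSM.mono (ℱ.le n)).aestronglyMeasurable) ?_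
      filter_upwards with ω
      rw [Real.norm_eq_abs, abs_of_nonneg (hf_nonneg ω)]
      exact hf_le_one ω
    -- decomposition
    have hdecomp : ∀ ω, W (k+1) ω = f ω * g ω + h ω := by
      intro ω
      by_cases hmB : ω ∈ B
      · by_cases hmG : ω ∈ G
        · have hV : repV M T i₀ (k+1) ω = M (n+1) ω := by
            rw [repV_succ]; exact if_pos hmG
          rw [hW_def]
          simp only [Set.indicator_of_mem hmB]
          rw [hV, hf_def, hh_def, Set.indicator_of_mem (Set.mem_inter hmB hmG),
            Set.indicator_of_notMem (fun hx => hx.2 hmG : ω ∉ B \ G), hg_def,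
            ← Real.exp_add, add_zero]
          congr 1; ring
        · have hV : repV M T i₀ (k+1) ω = repV M T i₀ k ω := by
            rw [repV_succ]; exact if_neg hmG
          rw [hW_def]
          simp only [Set.indicator_of_mem hmB]
          rw [hV, hf_def, hh_def,
            Set.indicator_of_notMem (fun hx => hmG hx.2 : ω ∉ B ∩ G),
            Set.indicator_of_mem (Set.mem_diff_of_mem hmB hmG), zero_mul, zero_add]
      · rw [hW_def]
        simp only [Set.indicator_of_notMem hmB]
        rw [hf_def, hh_def,
          Set.indicator_of_notMem (fun hx => hmB hx.1 : ω ∉ B ∩ G),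
          Set.indicator_of_notMem (fun hx => hmB hx.1 : ω ∉ B \ G), zero_mul, zero_add]
    have hrecomb : ∀ ω, f ω + h ω = W k ω := by
      intro ω
      by_cases hmB : ω ∈ B
      · by_cases hmG : ω ∈ G
        · have hV : repV M T i₀ k ω = M n ω := repV_eq_of_mem hmG
          rw [hW_def]
          simp only [Set.indicator_of_mem hmB]
          rw [hV, hf_def, hh_def, Set.indicator_of_mem (Set.mem_inter hmB hmG),
            Set.indicator_of_notMem (fun hx => hx.2 hmG : ω ∉ B \ G), add_zero]
        · rw [hW_def]
          simp only [Set.indicator_of_mem hmB]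
          rw [hf_def, hh_def,
            Set.indicator_of_notMem (fun hx => hmG hx.2 : ω ∉ B ∩ G),
            Set.indicator_of_mem (Set.mem_diff_of_mem hmB hmG), zero_add]
      · rw [hW_def]
        simp only [Set.indicator_of_notMem hmB]
        rw [hf_def, hh_def,
          Set.indicator_of_notMem (fun hx => hmB hx.1 : ω ∉ B ∩ G),
          Set.indicator_of_notMem (fun hx => hmB hx.1 : ω ∉ B \ G), add_zero]
    -- the conditional expectation estimate
    have hcond : ∀ᵐ ω ∂P, ω ∈ G → (P[g|ℱ n]) ω ≤ 1 := by
      set φ : Ω → ℝ := (fun _ => (1 + l^2 * c^2 : ℝ)) + l • (M (n+1) - M n) with hφ_def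
      have hφ_int : Integrable φ P :=
        (integrable_const _).add (((hInt (n+1)).sub (hInt n)).smul l)
      have hgφ : g ≤ᵐ[P] φ := by
        filter_upwards [hBdd n hi₀n] with ω hω
        have habs0 := abs_lt.1 hω
        have habs : |l * (M (n+1) ω - M n ω)| ≤ 1 := by
          rw [abs_mul, abs_of_nonneg hl.le]
          nlinarith [abs_nonneg (M (n+1) ω - M n ω)]
        have hq := exp_le_quadratic habs
        have hd2 : (M (n+1) ω - M n ω)^2 ≤ c^2 :=
          sq_le_sq' (by linarith [habs0.1]) (by linarith [habs0.2])
        have hsq : (l * (M (n+1) ω - M n ω))^2 ≤ l^2 * c^2 := by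
          rw [mul_pow]; exact mul_le_mul_of_nonneg_left hd2 (sq_nonneg l)
        have hφω : φ ω = (1 + l^2 * c^2 : ℝ) + l * (M (n+1) ω - M n ω) := by
          rw [hφ_def]; simp [smul_eq_mul]
        rw [hφω]
        calc g ω ≤ 1 + l * (M (n+1) ω - M n ω) + (l * (M (n+1) ω - M n ω))^2 := hq
        _ ≤ (1 + l^2 * c^2 : ℝ) + l * (M (n+1) ω - M n ω) := by linarith
      have h1 : P[g|ℱ n] ≤ᵐ[P] P[φ|ℱ n] := condExp_mono hg_int hφ_int hgφ
      have h2 : P[φ|ℱ n] =ᵐ[P] (fun _ => (1 + l^2 * c^2 : ℝ)) + l • (P[M (n+1)|ℱ n] - M n) := by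
        calc P[φ|ℱ n]
            =ᵐ[P] P[(fun _ => (1 + l^2 * c^2 : ℝ))|ℱ n] + P[l • (M (n+1) - M n)|ℱ n] :=
              condExp_add (integrable_const _) (((hInt (n+1)).sub (hInt n)).smul l) _
        _ =ᵐ[P] (fun _ => (1 + l^2 * c^2 : ℝ)) + l • P[M (n+1) - M n|ℱ n] := by
              refine EventuallyEq.add ?_ (condExp_smul l _ _)
              rw [condExp_const (ℱ.le n)]
        _ =ᵐ[P] (fun _ => (1 + l^2 * c^2 : ℝ)) + l • (P[M (n+1)|ℱ n] - P[M n|ℱ n]) := by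
              exact EventuallyEq.add EventuallyEq.rfl
                ((condExp_sub (hInt (n+1)) (hInt n) _).const_smul l)
        _ = (fun _ => (1 + l^2 * c^2 : ℝ)) + l • (P[M (n+1)|ℱ n] - M n) := by
              rw [condExp_of_stronglyMeasurable (ℱ.le n) (hAdapted n).stronglyMeasurable (hInt n)]
      filter_upwards [h1, h2, hDrift n hi₀n] with ω hω1 hω2 hdr hmG
      have hd := hdr hmG.1
      have hω2' : (P[φ|ℱ n]) ω = (1 + l^2 * c^2 : ℝ) + l * ((P[M (n+1)|ℱ n]) ω - M n ω) := by
        rw [hω2]; simp [smul_eq_mul]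
      have : (P[g|ℱ n]) ω ≤ (1 + l^2 * c^2 : ℝ) + l * ((P[M (n+1)|ℱ n]) ω - M n ω) := by
        rw [← hω2']; exact hω1
      have hle2 : l * ((P[M (n+1)|ℱ n]) ω - M n ω) ≤ l * (-ε) := by
        apply mul_le_mul_of_nonneg_left _ hl.le
        linarith
      nlinarith
    -- the integral step
    have hstep : ∫ ω, f ω * g ω ∂P ≤ ∫ ω, f ω ∂P := by
      have e2 : P[f * g|ℱ n] =ᵐ[P] f * P[g|ℱ n] := by
        refine condExp_stronglyMeasurable_mul_of_bound (ℱ.le n) hfSM hg_int 1 ?_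
        filter_upwards with ω
        rw [Real.norm_eq_abs, abs_of_nonneg (hf_nonneg ω)]
        exact hf_le_one ω
      have e3 : P[f * g|ℱ n] ≤ᵐ[P] f := by
        filter_upwards [e2, hcond] with ω hω2 hωc
        rw [hω2, Pi.mul_apply]
        by_cases hmBG : ω ∈ B ∩ G
        · calc f ω * (P[g|ℱ n]) ω ≤ f ω * 1 :=
                mul_le_mul_of_nonneg_left (hωc hmBG.2) (hf_nonneg ω)
          _ = f ω := mul_one _
        · rw [hf_def]
          simp only [Set.indicator_of_notMem hmBG, zero_mul, le_refl]
      calc ∫ ω, f ω * g ω ∂P = ∫ ω, (P[f * g|ℱ n]) ω ∂P :=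
            (integral_condExp (ℱ.le n)).symm
      _ ≤ ∫ ω, f ω ∂P := integral_mono_ae integrable_condExp hf_int e3
    calc ∫ ω, W (k+1) ω ∂P = ∫ ω, (f ω * g ω + h ω) ∂P := by
          exact integral_congr_ae (Eventually.of_forall hdecomp)
    _ = (∫ ω, f ω * g ω ∂P) + ∫ ω, h ω ∂P := integral_add hfg_int hh_int
    _ ≤ (∫ ω, f ω ∂P) + ∫ ω, h ω ∂P := by linarith
    _ = ∫ ω, (f ω + h ω) ∂P := (integral_add hf_int hh_int).symm
    _ = ∫ ω, W k ω ∂P := integral_congr_ae (Eventually.of_forall hrecomb)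
  -- lower bound by the termination probability
  have key3 : ∀ k, (P (B ∩ {ω | T ω ≤ ((i₀ + k : ℕ) : ℕ∞)})).toReal ≤ ∫ ω, W k ω ∂P := by
    intro k
    have hSmeas : MeasurableSet (B ∩ {ω | T ω ≤ ((i₀ + k : ℕ) : ℕ∞)}) :=
      hBmeas.inter (hTle _)
    have hle : (B ∩ {ω | T ω ≤ ((i₀ + k : ℕ) : ℕ∞)}).indicator
        (1 : Ω → ℝ) ≤ᵐ[P] W k := by
      filter_upwards [hEterm] with ω hω
      by_cases hmem : ω ∈ B ∩ {ω | T ω ≤ ((i₀ + k : ℕ) : ℕ∞)}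
      · rw [Set.indicator_of_mem hmem, hW_def]
        simp only [Set.indicator_of_mem hmem.1, Pi.one_apply]
        have hV := repV_nonneg hω hmem.1.2 k (Or.inl hmem.2)
        exact Real.one_le_exp (mul_nonneg hl.le hV)
      · rw [Set.indicator_of_notMem hmem]
        exact hWnonneg k ω
    calc (P (B ∩ {ω | T ω ≤ ((i₀ + k : ℕ) : ℕ∞)})).toReal
        = ∫ ω, (B ∩ {ω | T ω ≤ ((i₀ + k : ℕ) : ℕ∞)}).indicator (1 : Ω → ℝ) ω ∂P :=
          (integral_indicator_one hSmeas).symm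
    _ ≤ ∫ ω, W k ω ∂P :=
          integral_mono_ae ((integrable_const 1).indicator hSmeas) (hWint k) hle
  -- upper bound on the initial value
  have key4 : ∫ ω, W 0 ω ∂P ≤ Real.exp (-(l * δ)) * (P B).toReal := by
    have hle : ∀ ω, W 0 ω ≤ B.indicator (fun _ => Real.exp (-(l * δ))) ω := by
      intro ω
      by_cases hmB : ω ∈ B
      · rw [hW_def]
        simp only [Set.indicator_of_mem hmB]
        refine Real.exp_le_exp.2 ?_
        have h0 : repV M T i₀ 0 ω = M i₀ ω := rfl
        rw [h0]
        nlinarith [mul_le_mul_of_nonneg_left hmB.1 hl.le]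
      · rw [hW_def]
        simp only [Set.indicator_of_notMem hmB, le_refl]
    calc ∫ ω, W 0 ω ∂P ≤ ∫ ω, B.indicator (fun _ => Real.exp (-(l * δ))) ω ∂P :=
          integral_mono (hWint 0) ((integrable_const _).indicator hBmeas) hle
    _ = (P B).toReal • Real.exp (-(l * δ)) := integral_indicator_const _ hBmeas
    _ = Real.exp (-(l * δ)) * (P B).toReal := by rw [smul_eq_mul, mul_comm]
  have hWmono : ∀ k, ∫ ω, W k ω ∂P ≤ ∫ ω, W 0 ω ∂P := by
    intro k
    induction k with
    | zero => exact le_rfl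
    | succ k ih => exact (key2 k).trans ih
  -- conclusion
  set r : ℝ := Real.exp (-(l * δ)) with hr_def
  have hr1 : r < 1 := Real.exp_lt_one_iff.2 (by nlinarith)
  have hfin : ∀ k, P (B ∩ {ω | T ω ≤ ((i₀ + k : ℕ) : ℕ∞)})
      ≤ ENNReal.ofReal (r * (P B).toReal) := by
    intro k
    rw [← ENNReal.ofReal_toReal (measure_ne_top P _)]
    exact ENNReal.ofReal_le_ofReal ((key3 k).trans ((hWmono k).trans key4))
  have hmonoS : Monotone (fun k : ℕ => B ∩ {ω | T ω ≤ ((i₀ + k : ℕ) : ℕ∞)}) := by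
    intro a b hab
    refine Set.inter_subset_inter_right _ ?_
    intro ω hω
    have hcast : ((i₀ + a : ℕ) : ℕ∞) ≤ ((i₀ + b : ℕ) : ℕ∞) := by
      exact_mod_cast Nat.add_le_add_left hab i₀
    exact le_trans hω hcast
  have hUnion : B ∩ {ω | T ω ≠ ⊤} ⊆ ⋃ k, (B ∩ {ω | T ω ≤ ((i₀ + k : ℕ) : ℕ∞)}) := by
    rintro ω ⟨hmB, hT⟩
    cases hTW : T ω with
    | top => exact absurd hTW hT
    | coe m =>
      refine Set.mem_iUnion.2 ⟨m, hmB, ?_⟩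
      show T ω ≤ ((i₀ + m : ℕ) : ℕ∞)
      rw [hTW]
      have hcast : (m : ℕ) ≤ i₀ + m := Nat.le_add_left m i₀
      exact_mod_cast hcast
  have hPU : P (B ∩ {ω | T ω ≠ ⊤}) ≤ ENNReal.ofReal (r * (P B).toReal) := by
    calc P (B ∩ {ω | T ω ≠ ⊤})
        ≤ P (⋃ k, (B ∩ {ω | T ω ≤ ((i₀ + k : ℕ) : ℕ∞)})) := measure_mono hUnion
    _ = ⨆ k, P (B ∩ {ω | T ω ≤ ((i₀ + k : ℕ) : ℕ∞)}) :=
          Directed.measure_iUnion hmonoS.directed_le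
    _ ≤ ENNReal.ofReal (r * (P B).toReal) := iSup_le hfin
  by_contra hcon
  push_neg at hcon
  have hz : P {ω | T ω = ⊤} = 0 := le_antisymm hcon zero_le
  have h2 : P (B ∩ {ω | T ω = ⊤}) = 0 :=
    le_antisymm ((measure_mono Set.inter_subset_right).trans hz.le) zero_le
  have hsplit : P B ≤ P (B ∩ {ω | T ω ≠ ⊤}) + P (B ∩ {ω | T ω = ⊤}) := by
    have : B = (B ∩ {ω | T ω ≠ ⊤}) ∪ (B ∩ {ω | T ω = ⊤}) := by
      ext ω
      by_cases hT : T ω = ⊤ <;> simp [hT]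
    calc P B = P ((B ∩ {ω | T ω ≠ ⊤}) ∪ (B ∩ {ω | T ω = ⊤})) := by rw [← this]
    _ ≤ _ := measure_union_le _ _
  rw [h2, add_zero] at hsplit
  have hPB2 := hsplit.trans hPU
  have htR : (P B).toReal ≤ r * (P B).toReal := by
    have h3 := ENNReal.toReal_mono ENNReal.ofReal_ne_top hPB2
    rwa [ENNReal.toReal_ofReal (by positivity)] at h3
  have hpB : 0 < (P B).toReal := ENNReal.toReal_pos hPB.ne' (measure_ne_top P B)
  nlinarith
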